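/- Let p ∈ (0,1] ∪ [2,∞). For any measure space (X, 𝒜, μ) and any measurable f, g : X → [0,∞) with ∫ f^p dμ < ∞ and ∫ g^p dμ < ∞, setting C := min{∫ f^p dμ, ∫ g^p dμ, ∫ (fg)^{p/2} dμ} / ∫ (fg)^{p/2} dμ if ∫ (fg)^{p/2} dμ > 0 and C := 1 otherwise, one has ∫ (f+g)^p dμ ≥ ∫ f^p dμ + ∫ g^p dμ + ( (C^{−1/p} + C^{1/p})^p − C^{−1} − C ) · ∫ (fg)^{p/2} dμ. -/

import Mathlib

open MeasureTheory Real Set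
open scoped ENNReal

noncomputable def sPhi (p t : ℝ) : ℝ := (t ^ (-(1 / p)) + t ^ (1 / p)) ^ p - t⁻¹ - t

noncomputable def sPsi1 (p t : ℝ) : ℝ :=
  ((1 + t ^ (2 / p)) ^ (p - 1) * (t ^ (2 / p) - 1) + 1) / t ^ 2 - 1

noncomputable def sPsi2 (p t : ℝ) : ℝ :=
  2 * ((1 + t ^ (2 / p)) ^ (p - 2) * (1 + (2 / p - 1) * t ^ (2 / p)) - 1) / t ^ 3

/-- Bernoulli's inequality for exponents in `[-1,0] ∪ [1,∞)`. -/
lemma bern {α x : ℝ} (hx : -1 < x) (hα : (-1 ≤ α ∧ α ≤ 0) ∨ 1 ≤ α) :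
    1 + α * x ≤ (1 + x) ^ α := by
  rcases hα with ⟨hα1, hα0⟩ | hα1
  · rcases le_or_gt (1 + α * x) 0 with h | h
    · exact h.trans (rpow_nonneg (by linarith) _)
    · have hb : (0:ℝ) < 1 + x := by linarith
      have hup : (1 + x) ^ (-α) ≤ 1 + (-α) * x :=
        rpow_one_add_le_one_add_mul_self hx.le (by linarith) (by linarith)
      have hpos : (0:ℝ) < (1 + x) ^ (-α) := rpow_pos_of_pos hb _
      have key : (1 + α * x) * ((1 + x) ^ (-α)) ≤ 1 := by
        calc (1 + α * x) * ((1 + x) ^ (-α)) ≤ (1 + α * x) * (1 + (-α) * x) :=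
              mul_le_mul_of_nonneg_left hup h.le
          _ = 1 - α ^ 2 * x ^ 2 := by ring
          _ ≤ 1 := by nlinarith [sq_nonneg (α * x)]
      have h2 : 1 + α * x ≤ ((1 + x) ^ (-α))⁻¹ := by
        rw [← one_div, le_div_iff₀ hpos]; linarith [key]
      calc 1 + α * x ≤ ((1 + x) ^ (-α))⁻¹ := h2
        _ = (1 + x) ^ α := by rw [← rpow_neg hb.le, neg_neg]
  · exact one_add_mul_self_le_rpow_one_add hx.le hα1

section Signs
variable {p t : ℝ} (hp : p ∈ Set.Ioc (0 : ℝ) 1 ∪ Set.Ici (2 : ℝ))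

lemma hp_pos (hp : p ∈ Set.Ioc (0 : ℝ) 1 ∪ Set.Ici (2 : ℝ)) : 0 < p := by
  rcases hp with h | h
  · exact h.1
  · linarith [mem_Ici.mp h]

lemma hp_bern (hp : p ∈ Set.Ioc (0 : ℝ) 1 ∪ Set.Ici (2 : ℝ)) :
    (-1 ≤ p - 1 ∧ p - 1 ≤ 0) ∨ 1 ≤ p - 1 := by
  rcases hp with h | h
  · exact Or.inl ⟨by linarith [h.1], by linarith [h.2]⟩
  · exact Or.inr (by linarith [mem_Ici.mp h])

lemma hp_pp (hp : p ∈ Set.Ioc (0 : ℝ) 1 ∪ Set.Ici (2 : ℝ)) : 0 ≤ (p - 1) * (p - 2) := by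
  rcases hp with h | h
  · nlinarith [h.1, h.2]
  · nlinarith [mem_Ici.mp h]

lemma sPsi1_nonpos (hp : p ∈ Set.Ioc (0 : ℝ) 1 ∪ Set.Ici (2 : ℝ)) (ht : t ∈ Set.Ioc (0 : ℝ) 1) : sPsi1 p t ≤ 0 := by
  have hp0 : 0 < p := hp_pos hp
  have ht0 : 0 < t := ht.1
  set r := t ^ (2 / p) with hr
  have hr0 : 0 < r := rpow_pos_of_pos ht0 _
  have hr1 : r ≤ 1 := rpow_le_one ht0.le ht.2 (by positivity)
  have ht2 : t ^ 2 = r ^ p := by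
    rw [hr, ← Real.rpow_mul ht0.le, div_mul_cancel₀ _ hp0.ne', ← Real.rpow_natCast t 2]
    norm_num
  have f1 : 1 + (p - 1) * r ≤ (1 + r) ^ (p - 1) := bern (by linarith) (hp_bern hp)
  have f2 : 1 + (p - 1) * (r - 1) ≤ r ^ (p - 1) := by
    have := bern (x := r - 1) (by linarith) (hp_bern hp)
    rwa [show 1 + (r - 1) = r by ring] at this
  have f4 : r * r ^ (p - 1) = r ^ p := by
    rw [Real.rpow_sub hr0, rpow_one]; field_simp
  have key : (1 + r) ^ (p - 1) * (r - 1) + 1 ≤ t ^ 2 := by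
    rw [ht2]
    nlinarith [mul_le_mul_of_nonneg_left f1 (by linarith : (0:ℝ) ≤ 1 - r),
      mul_le_mul_of_nonneg_left f2 hr0.le, f4]
  have : ((1 + r) ^ (p - 1) * (r - 1) + 1) / t ^ 2 ≤ 1 := by
    rw [div_le_one (by positivity)]; exact key
  have hrfl : sPsi1 p t = ((1 + r) ^ (p - 1) * (r - 1) + 1) / t ^ 2 - 1 := rfl
  rw [hrfl]; linarith

lemma sPsi2_nonneg (hp : p ∈ Set.Ioc (0 : ℝ) 1 ∪ Set.Ici (2 : ℝ)) (ht : t ∈ Set.Ioc (0 : ℝ) 1) : 0 ≤ sPsi2 p t := by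
  have hp0 : 0 < p := hp_pos hp
  have ht0 : 0 < t := ht.1
  set q := 2 / p with hq
  have hq0 : 0 < q := by positivity
  have hqp : q * p = 2 := by rw [hq]; field_simp
  set r := t ^ (2 / p) with hr
  have hr0 : 0 < r := rpow_pos_of_pos ht0 _
  have hr1 : r ≤ 1 := rpow_le_one ht0.le ht.2 (by positivity)
  have f1 : 1 + (p - 1) * r ≤ (1 + r) ^ (p - 1) := bern (by linarith) (hp_bern hp)
  have e1 : (1 + r) ^ (p - 1) = (1 + r) ^ (p - 2) * (1 + r) := by
    rw [show p - 1 = (p - 2) + 1 by ring, Real.rpow_add (by linarith), rpow_one]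
  have hqr : 0 ≤ 1 + (q - 1) * r := by nlinarith
  have hkey : (1 + r) ≤ (1 + (p - 1) * r) * (1 + (q - 1) * r) := by
    have h5 : 0 ≤ (p - 1) * (p - 2) * (r * (1 - r)) :=
      mul_nonneg (hp_pp hp) (mul_nonneg hr0.le (by linarith))
    have expand : p * ((1 + (p - 1) * r) * (1 + (q - 1) * r) - (1 + r)) =
        (p - 1) * (p - 2) * (r * (1 - r)) := by
      rw [hq]; field_simp; ring
    nlinarith [h5, expand, hp0]
  have hchain : (1 + r) * 1 ≤ (1 + r) * ((1 + r) ^ (p - 2) * (1 + (q - 1) * r)) := by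
    calc (1 + r) * 1 = 1 + r := by ring
      _ ≤ (1 + (p - 1) * r) * (1 + (q - 1) * r) := hkey
      _ ≤ (1 + r) ^ (p - 1) * (1 + (q - 1) * r) := mul_le_mul_of_nonneg_right f1 hqr
      _ = (1 + r) * ((1 + r) ^ (p - 2) * (1 + (q - 1) * r)) := by rw [e1]; ring
  have hfin : 1 ≤ (1 + r) ^ (p - 2) * (1 + (q - 1) * r) :=
    le_of_mul_le_mul_left hchain (by linarith)
  have hrfl : sPsi2 p t = 2 * ((1 + r) ^ (p - 2) * (1 + (q - 1) * r) - 1) / t ^ 3 := rfl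
  rw [hrfl]
  have h3 : (0:ℝ) < t ^ 3 := by positivity
  apply div_nonneg _ h3.le
  linarith

end Signs

lemma hasDerivAt_sPhi {p t : ℝ} (hp0 : 0 < p) (ht : 0 < t) :
    HasDerivAt (sPhi p) (sPsi1 p t) t := by
  have h1 : HasDerivAt (fun x : ℝ => x ^ (-(1 / p)))
      (-(1 / p) * t ^ (-(1 / p) - 1)) t := hasDerivAt_rpow_const (Or.inl ht.ne')
  have h2 : HasDerivAt (fun x : ℝ => x ^ (1 / p))
      ((1 / p) * t ^ (1 / p - 1)) t := hasDerivAt_rpow_const (Or.inl ht.ne')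
  have hu := h1.add h2
  have hupos : 0 < t ^ (-(1 / p)) + t ^ (1 / p) := by positivity
  have h3 := hu.rpow_const (p := p) (Or.inl hupos.ne')
  have hinv : HasDerivAt (fun y : ℝ => y⁻¹) (-(t ^ 2)⁻¹) t := hasDerivAt_inv ht.ne'
  have final := (h3.sub hinv).sub (hasDerivAt_id t)
  convert final using 1
  · rfl
  · rfl
  · rfl
  simp only [Pi.add_apply]
  set a := t ^ (1 / p) with hadef
  have ha : 0 < a := rpow_pos_of_pos ht _
  have w1 : t ^ (-(1 / p)) = a⁻¹ := by rw [rpow_neg ht.le]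
  have w2 : t ^ (-(1 / p) - 1) = a⁻¹ * t⁻¹ := by
    rw [show -(1 / p) - 1 = -(1 / p) + (-1) by ring, Real.rpow_add ht, rpow_neg_one, w1]
  have w3 : t ^ (1 / p - 1) = a * t⁻¹ := by
    rw [show 1 / p - 1 = 1 / p + (-1) by ring, Real.rpow_add ht, rpow_neg_one]
  have w4 : t ^ (2 / p) = a * a := by
    rw [hadef, ← Real.rpow_add ht]; congr 1; ring
  have w5 : a ^ p = t := by
    rw [hadef, ← Real.rpow_mul ht.le, one_div_mul_cancel hp0.ne', rpow_one]
  have w6 : (a⁻¹ + a) ^ (p - 1) = (a ^ (p - 1))⁻¹ * (1 + a * a) ^ (p - 1) := by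
    rw [show a⁻¹ + a = a⁻¹ * (1 + a * a) by field_simp,
      Real.mul_rpow (by positivity) (by positivity), Real.inv_rpow ha.le]
  have w7 : a ^ (p - 1) = t / a := by rw [Real.rpow_sub ha, w5, rpow_one]
  unfold sPsi1
  rw [w4, w1, w2, w3, w6, w7]
  have hB : (0:ℝ) < (1 + a * a) ^ (p - 1) := by positivity
  set B := (1 + a * a) ^ (p - 1) with hBdef
  field_simp
  ring

lemma hasDerivAt_sPsi1 {p t : ℝ} (hp0 : 0 < p) (ht : 0 < t) :
    HasDerivAt (sPsi1 p) (sPsi2 p t) t := by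
  have hr : HasDerivAt (fun x : ℝ => x ^ (2 / p)) ((2 / p) * t ^ (2 / p - 1)) t :=
    hasDerivAt_rpow_const (Or.inl ht.ne')
  have h1r := hr.const_add 1
  have hpos : (0:ℝ) < 1 + t ^ (2 / p) := by positivity
  have hA := h1r.rpow_const (p := p - 1) (Or.inl hpos.ne')
  have hB := hr.sub_const 1
  have hN := (hA.mul hB).add_const 1
  have hden : HasDerivAt (fun x : ℝ => x ^ 2) (2 * t) t := by
    simpa using hasDerivAt_pow 2 t
  have hq := hN.div hden (pow_ne_zero 2 ht.ne')
  have final := hq.sub_const 1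
  convert final using 1
  · rfl
  · rfl
  · rfl
  simp only [Pi.mul_apply]
  set r := t ^ (2 / p) with hrdef
  have hr0 : 0 < r := rpow_pos_of_pos ht _
  have e2 : t ^ (2 / p - 1) = r * t⁻¹ := by
    rw [show 2 / p - 1 = 2 / p + (-1) by ring, Real.rpow_add ht, rpow_neg_one, hrdef]
  have e3 : (1 + r) ^ (p - 1 - 1) = (1 + r) ^ (p - 2) := by rw [show p - 1 - 1 = p - 2 by ring]
  have e4 : (1 + r) ^ (p - 1) = (1 + r) ^ (p - 2) * (1 + r) := by
    rw [show p - 1 = (p - 2) + 1 by ring, Real.rpow_add hpos, rpow_one]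
  unfold sPsi2
  rw [e2, e3, e4]
  set D := (1 + r) ^ (p - 2) with hDdef
  field_simp
  ring

lemma sPsi1_mono {p : ℝ} (hp : p ∈ Set.Ioc (0 : ℝ) 1 ∪ Set.Ici (2 : ℝ)) :
    MonotoneOn (sPsi1 p) (Set.Ioc (0:ℝ) 1) := by
  have hp0 := hp_pos hp
  apply monotoneOn_of_deriv_nonneg (convex_Ioc 0 1)
  · exact fun x hx => (hasDerivAt_sPsi1 hp0 hx.1).continuousAt.continuousWithinAt
  · intro x hx
    rw [interior_Ioc] at hx
    exact (hasDerivAt_sPsi1 hp0 hx.1).differentiableAt.differentiableWithinAt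
  · intro x hx
    rw [interior_Ioc] at hx
    rw [(hasDerivAt_sPsi1 hp0 hx.1).deriv]
    exact sPsi2_nonneg hp ⟨hx.1, hx.2.le⟩

lemma sPhi_tangent {p : ℝ} (hp : p ∈ Set.Ioc (0 : ℝ) 1 ∪ Set.Ici (2 : ℝ))
    {c s : ℝ} (hc : c ∈ Set.Ioc (0:ℝ) 1) (hs : s ∈ Set.Ioc (0:ℝ) 1) :
    sPhi p c + sPsi1 p c * (s - c) ≤ sPhi p s := by
  have hp0 := hp_pos hp
  set F : ℝ → ℝ := fun x => sPhi p x - sPsi1 p c * x with hF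
  have hFd : ∀ x : ℝ, 0 < x → HasDerivAt F (sPsi1 p x - sPsi1 p c) x := by
    intro x hx
    have := (hasDerivAt_sPhi hp0 hx).sub ((hasDerivAt_id x).const_mul (sPsi1 p c))
    simp only [mul_one] at this
    exact this
  have main : F c ≤ F s := by
    rcases le_total s c with h | h
    · have anti : AntitoneOn F (Icc s c) := by
        apply antitoneOn_of_deriv_nonpos (convex_Icc s c)
        · exact fun x hx => (hFd x (lt_of_lt_of_le hs.1 hx.1)).continuousAt.continuousWithinAt
        · intro x hx
          rw [interior_Icc] at hx
          exact (hFd x (lt_of_lt_of_le hs.1 hx.1.le)).differentiableAt.differentiableWithinAt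
        · intro x hx
          rw [interior_Icc] at hx
          rw [(hFd x (lt_trans hs.1 hx.1)).deriv]
          have := sPsi1_mono hp (⟨lt_trans hs.1 hx.1, le_trans hx.2.le hc.2⟩ :
            x ∈ Set.Ioc (0:ℝ) 1) hc hx.2.le
          linarith
      exact anti ⟨le_rfl, h⟩ ⟨h, le_rfl⟩ h
    · have mono : MonotoneOn F (Icc c s) := by
        apply monotoneOn_of_deriv_nonneg (convex_Icc c s)
        · exact fun x hx => (hFd x (lt_of_lt_of_le hc.1 hx.1)).continuousAt.continuousWithinAt
        · intro x hx
          rw [interior_Icc] at hx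
          exact (hFd x (lt_of_lt_of_le hc.1 hx.1.le)).differentiableAt.differentiableWithinAt
        · intro x hx
          rw [interior_Icc] at hx
          rw [(hFd x (lt_trans hc.1 hx.1)).deriv]
          have := sPsi1_mono hp hc (⟨lt_trans hc.1 hx.1, le_trans hx.2.le hs.2⟩ :
            x ∈ Set.Ioc (0:ℝ) 1) hx.1.le
          linarith
      exact mono ⟨le_rfl, h⟩ ⟨h, le_rfl⟩ h
  simp only [hF] at main
  nlinarith [main]
lemma pointwise_aux {p : ℝ} (hp : p ∈ Set.Ioc (0 : ℝ) 1 ∪ Set.Ici (2 : ℝ))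
    {c a b : ℝ} (hc : c ∈ Set.Ioc (0:ℝ) 1) (ha : 0 < a) (hab : a ≤ b) :
    a ^ p + b ^ p + sPhi p c * (a * b) ^ (p / 2) +
      sPsi1 p c * (a ^ p - c * (a * b) ^ (p / 2)) ≤ (a + b) ^ p := by
  have hp0 := hp_pos hp
  have hb : 0 < b := lt_of_lt_of_le ha hab
  have hab0 : (0:ℝ) < a * b := by positivity
  set w := (a * b) ^ (p / 2) with hw
  have hw0 : 0 < w := rpow_pos_of_pos hab0 _
  set s := a ^ p / w with hs
  have hap : (0:ℝ) < a ^ p := rpow_pos_of_pos ha _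
  have hs0 : 0 < s := div_pos hap hw0
  have hs1 : s ≤ 1 := by
    rw [hs, div_le_one hw0, hw]
    calc a ^ p = a ^ (p/2) * a ^ (p/2) := by
          rw [← Real.rpow_add ha]; norm_num
      _ ≤ a ^ (p/2) * b ^ (p/2) := by
          apply mul_le_mul_of_nonneg_left _ (rpow_pos_of_pos ha _).le
          exact rpow_le_rpow ha.le hab (by positivity)
      _ = (a * b) ^ (p/2) := (Real.mul_rpow ha.le hb.le).symm
  have hhalf : (0:ℝ) < (a*b) ^ ((1:ℝ)/2) := rpow_pos_of_pos hab0 _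
  have epe : p/2 * (1/p) = 1/2 := by field_simp
  have i1 : s ^ (1/p) = a / (a*b) ^ ((1:ℝ)/2) := by
    rw [hs, Real.div_rpow hap.le hw0.le, ← Real.rpow_mul ha.le,
      mul_one_div_cancel hp0.ne', rpow_one, hw, ← Real.rpow_mul hab0.le, epe]
  have i2 : s ^ (-(1/p)) = (a*b) ^ ((1:ℝ)/2) / a := by
    rw [rpow_neg hs0.le, i1, inv_div]
  have hsq : (a*b) ^ ((1:ℝ)/2) * (a*b) ^ ((1:ℝ)/2) = a * b := by
    rw [← Real.rpow_add hab0]; norm_num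
  have key1 : s ^ (-(1/p)) + s ^ (1/p) = (a+b) / (a*b) ^ ((1:ℝ)/2) := by
    rw [i1, i2]
    field_simp
    linear_combination hsq
  have key2 : (s ^ (-(1/p)) + s ^ (1/p)) ^ p = (a+b) ^ p / w := by
    rw [key1, Real.div_rpow (by positivity) hhalf.le, hw, ← Real.rpow_mul hab0.le]
    congr 2
    ring
  have hw2 : w * w = a ^ p * b ^ p := by
    rw [hw, ← Real.rpow_add hab0, show p/2+p/2 = p by ring, Real.mul_rpow ha.le hb.le]
  have e5 : sPhi p s = (a+b)^p/w - w/a^p - a^p/w := by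
    rw [sPhi, key2, hs, inv_div]
  have e6 : w / a^p * w = b ^ p := by
    rw [div_mul_eq_mul_div, hw2]
    exact mul_div_cancel_left₀ _ hap.ne'
  have identity : sPhi p s * w = (a+b) ^ p - a ^ p - b ^ p := by
    rw [e5]
    calc ((a+b)^p/w - w/a^p - a^p/w) * w
        = (a+b)^p/w*w - (w/a^p)*w - a^p/w*w := by ring
      _ = (a+b)^p - b^p - a^p := by
          rw [div_mul_cancel₀ _ hw0.ne', div_mul_cancel₀ _ hw0.ne', e6]
      _ = (a+b)^p - a^p - b^p := by ring
  have tangent := sPhi_tangent hp hc ⟨hs0, hs1⟩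
  have tmul := mul_le_mul_of_nonneg_right tangent hw0.le
  have hsw : s * w = a ^ p := div_mul_cancel₀ _ hw0.ne'
  have e7 : sPsi1 p c * (a^p - c*w) = (sPsi1 p c * (s - c)) * w := by
    rw [← hsw]; ring
  linarith [tmul, identity, e7]

lemma pointwise {p : ℝ} (hp : p ∈ Set.Ioc (0 : ℝ) 1 ∪ Set.Ici (2 : ℝ))
    {c : ℝ} (hc : c ∈ Set.Ioc (0:ℝ) 1) {a b : ℝ} (ha : 0 ≤ a) (hb : 0 ≤ b) :
    a ^ p + b ^ p + sPhi p c * (a * b) ^ (p / 2) +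
      sPsi1 p c * ((min a b) ^ p - c * (a * b) ^ (p / 2)) ≤ (a + b) ^ p := by
  have hp0 := hp_pos hp
  rcases eq_or_lt_of_le ha with h0 | ha'
  · simp [← h0, min_eq_left hb, Real.zero_rpow hp0.ne',
      Real.zero_rpow (by positivity : p/2 ≠ 0)]
  rcases eq_or_lt_of_le hb with h0 | hb'
  · simp [← h0, min_eq_right ha, Real.zero_rpow hp0.ne',
      Real.zero_rpow (by positivity : p/2 ≠ 0)]
  rcases le_total a b with h | h
  · rw [min_eq_left h]
    exact pointwise_aux hp hc ha' h
  · rw [min_eq_right h]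
    have := pointwise_aux hp hc hb' h
    rw [mul_comm b a, add_comm b a] at this
    linarith [this]

/-- Theorem 2 (lower bound), for `p ∈ (0,1] ∪ [2,∞)`:
`‖f+g‖_p^p ≥ ‖f‖_p^p + ‖g‖_p^p + ((C^{-1/p} + C^{1/p})^p - C⁻¹ - C) ‖fg‖_{p/2}^{p/2}`.
Since the coefficient may be negative (for `p ∈ (0,1]`), the inequality is stated for the
real values of the (automatically finite) integrals. -/
theorem statement5
    {X : Type*} [MeasurableSpace X] (μ : Measure X) (p : ℝ)
    (hp : p ∈ Set.Ioc (0 : ℝ) 1 ∪ Set.Ici (2 : ℝ))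
    (f g : X → ℝ≥0∞) (hf : Measurable f) (hg : Measurable g)
    (hffin : ∀ x, f x ≠ ∞) (hgfin : ∀ x, g x ≠ ∞)
    (hfp : ∫⁻ x, f x ^ p ∂μ ≠ ∞) (hgp : ∫⁻ x, g x ^ p ∂μ ≠ ∞)
    (C : ℝ)
    (hC : C = if 0 < ∫⁻ x, (f x * g x) ^ (p / 2) ∂μ then
        min (min (∫⁻ x, f x ^ p ∂μ).toReal (∫⁻ x, g x ^ p ∂μ).toReal)
            (∫⁻ x, (f x * g x) ^ (p / 2) ∂μ).toReal /
          (∫⁻ x, (f x * g x) ^ (p / 2) ∂μ).toReal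
      else 1) :
    (∫⁻ x, f x ^ p ∂μ).toReal + (∫⁻ x, g x ^ p ∂μ).toReal +
        ((C ^ (-(1 / p)) + C ^ (1 / p)) ^ p - C⁻¹ - C) *
          (∫⁻ x, (f x * g x) ^ (p / 2) ∂μ).toReal ≤
      (∫⁻ x, (f x + g x) ^ p ∂μ).toReal := by
  have hp0 : 0 < p := hp_pos hp
  have hhalf : (0:ℝ) ≤ p / 2 := by positivity
  -- measurability
  have mfp : Measurable fun x => f x ^ p := hf.pow_const p
  have mgp : Measurable fun x => g x ^ p := hg.pow_const p
  have mI : Measurable fun x => (f x * g x) ^ (p / 2) := (hf.mul hg).pow_const _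
  have mS : Measurable fun x => (f x + g x) ^ p := (hf.add hg).pow_const _
  -- helper: z^(p/2) * z^(p/2) = z^p in ℝ≥0∞
  have hzz : ∀ z : ℝ≥0∞, z ^ (p/2) * z ^ (p/2) = z ^ p := by
    intro z
    rw [← ENNReal.rpow_add_of_nonneg (p/2) (p/2) hhalf hhalf, show p/2 + p/2 = p by ring]
  -- pointwise bound for (fg)^(p/2)
  have pbI : ∀ x, (f x * g x) ^ (p/2) ≤ f x ^ p + g x ^ p := by
    intro x
    rw [ENNReal.mul_rpow_of_ne_top (hffin x) (hgfin x)]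
    rcases le_total (f x) (g x) with h | h
    · calc f x ^ (p/2) * g x ^ (p/2) ≤ g x ^ (p/2) * g x ^ (p/2) :=
            mul_le_mul_left (ENNReal.rpow_le_rpow h hhalf) _
        _ = g x ^ p := hzz _
        _ ≤ f x ^ p + g x ^ p := le_add_self
    · calc f x ^ (p/2) * g x ^ (p/2) ≤ f x ^ (p/2) * f x ^ (p/2) :=
            mul_le_mul_right (ENNReal.rpow_le_rpow h hhalf) _
        _ = f x ^ p := hzz _
        _ ≤ f x ^ p + g x ^ p := le_add_right le_rfl
  have hABfin : (∫⁻ x, f x ^ p ∂μ) + (∫⁻ x, g x ^ p ∂μ) ≠ ⊤ := ENNReal.add_ne_top.mpr ⟨hfp, hgp⟩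
  have hIfin : (∫⁻ x, (f x * g x) ^ (p / 2) ∂μ) ≠ ⊤ := by
    apply ne_top_of_le_ne_top hABfin
    calc ∫⁻ x, (f x * g x) ^ (p / 2) ∂μ ≤ ∫⁻ x, (f x ^ p + g x ^ p) ∂μ := lintegral_mono pbI
      _ = _ := lintegral_add_left mfp _
  -- pointwise bound for (f+g)^p
  have pbS : ∀ x, (f x + g x) ^ p ≤ 2 ^ p * (f x ^ p + g x ^ p) := by
    intro x
    rcases le_total (f x) (g x) with h | h
    · calc (f x + g x) ^ p ≤ (g x + g x) ^ p := ENNReal.rpow_le_rpow (add_le_add_left h _) hp0.le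
        _ = (2 * g x) ^ p := by rw [two_mul]
        _ = 2 ^ p * g x ^ p := ENNReal.mul_rpow_of_ne_top (by norm_num) (hgfin x) _
        _ ≤ 2 ^ p * (f x ^ p + g x ^ p) := mul_le_mul_right le_add_self _
    · calc (f x + g x) ^ p ≤ (f x + f x) ^ p := ENNReal.rpow_le_rpow (add_le_add_right h _) hp0.le
        _ = (2 * f x) ^ p := by rw [two_mul]
        _ = 2 ^ p * f x ^ p := ENNReal.mul_rpow_of_ne_top (by norm_num) (hffin x) _
        _ ≤ 2 ^ p * (f x ^ p + g x ^ p) := mul_le_mul_right (le_add_right le_rfl) _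
  have hSfin : (∫⁻ x, (f x + g x) ^ p ∂μ) ≠ ⊤ := by
    apply ne_top_of_le_ne_top (ENNReal.mul_ne_top
      (ENNReal.rpow_lt_top_of_nonneg hp0.le (ENNReal.ofNat_ne_top (n := 2))).ne hABfin)
    calc ∫⁻ x, (f x + g x) ^ p ∂μ ≤ ∫⁻ x, 2 ^ p * (f x ^ p + g x ^ p) ∂μ := lintegral_mono pbS
      _ = 2 ^ p * ∫⁻ x, (f x ^ p + g x ^ p) ∂μ := lintegral_const_mul _ (mfp.add mgp)
      _ = _ := by rw [lintegral_add_left mfp]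
  -- real-valued versions
  set F : X → ℝ := fun x => (f x).toReal with hF
  set G : X → ℝ := fun x => (g x).toReal with hG
  have hFm : Measurable F := hf.ennreal_toReal
  have hGm : Measurable G := hg.ennreal_toReal
  have hFnn : ∀ x, 0 ≤ F x := fun x => ENNReal.toReal_nonneg
  have hGnn : ∀ x, 0 ≤ G x := fun x => ENNReal.toReal_nonneg
  -- integral conversions
  have cA : ∫ x, F x ^ p ∂μ = (∫⁻ x, f x ^ p ∂μ).toReal := by
    simp_rw [hF, ENNReal.toReal_rpow]
    exact integral_toReal mfp.aemeasurable
      (ae_of_all _ fun x => ENNReal.rpow_lt_top_of_nonneg hp0.le (hffin x))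
  have cB : ∫ x, G x ^ p ∂μ = (∫⁻ x, g x ^ p ∂μ).toReal := by
    simp_rw [hG, ENNReal.toReal_rpow]
    exact integral_toReal mgp.aemeasurable
      (ae_of_all _ fun x => ENNReal.rpow_lt_top_of_nonneg hp0.le (hgfin x))
  have cI : ∫ x, (F x * G x) ^ (p/2) ∂μ = (∫⁻ x, (f x * g x) ^ (p / 2) ∂μ).toReal := by
    simp_rw [hF, hG, ← ENNReal.toReal_mul, ENNReal.toReal_rpow]
    exact integral_toReal mI.aemeasurable
      (ae_of_all _ fun x => ENNReal.rpow_lt_top_of_nonneg hhalf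
        (ENNReal.mul_ne_top (hffin x) (hgfin x)))
  have cS : ∫ x, (F x + G x) ^ p ∂μ = (∫⁻ x, (f x + g x) ^ p ∂μ).toReal := by
    simp_rw [hF, hG, ← ENNReal.toReal_add (hffin _) (hgfin _), ENNReal.toReal_rpow]
    exact integral_toReal mS.aemeasurable
      (ae_of_all _ fun x => ENNReal.rpow_lt_top_of_nonneg hp0.le
        (ENNReal.add_ne_top.mpr ⟨hffin x, hgfin x⟩))
  -- integrabilities
  have intF : Integrable (fun x => F x ^ p) μ := by
    have := integrable_toReal_of_lintegral_ne_top mfp.aemeasurable hfp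
    simpa only [← ENNReal.toReal_rpow] using this
  have intG : Integrable (fun x => G x ^ p) μ := by
    have := integrable_toReal_of_lintegral_ne_top mgp.aemeasurable hgp
    simpa only [← ENNReal.toReal_rpow] using this
  have intI : Integrable (fun x => (F x * G x) ^ (p/2)) μ := by
    have := integrable_toReal_of_lintegral_ne_top mI.aemeasurable hIfin
    simpa only [← ENNReal.toReal_rpow, ENNReal.toReal_mul] using this
  have intS : Integrable (fun x => (F x + G x) ^ p) μ := by
    have := integrable_toReal_of_lintegral_ne_top mS.aemeasurable hSfin
    simpa only [← ENNReal.toReal_rpow, ENNReal.toReal_add (hffin _) (hgfin _)] using this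
  have mMin : Measurable fun x => min (F x) (G x) ^ p := by fun_prop
  have intMin : Integrable (fun x => min (F x) (G x) ^ p) μ := by
    apply intF.mono mMin.aestronglyMeasurable
    apply ae_of_all
    intro x
    rw [Real.norm_of_nonneg (Real.rpow_nonneg (le_min (hFnn x) (hGnn x)) _),
      Real.norm_of_nonneg (Real.rpow_nonneg (hFnn x) _)]
    exact Real.rpow_le_rpow (le_min (hFnn x) (hGnn x)) (min_le_left _ _) hp0.le
  -- pointwise min bounds
  have pmin1 : ∀ x, min (F x) (G x) ^ p ≤ F x ^ p := fun x =>
    Real.rpow_le_rpow (le_min (hFnn x) (hGnn x)) (min_le_left _ _) hp0.le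
  have pmin2 : ∀ x, min (F x) (G x) ^ p ≤ G x ^ p := fun x =>
    Real.rpow_le_rpow (le_min (hFnn x) (hGnn x)) (min_le_right _ _) hp0.le
  have pmin3 : ∀ x, min (F x) (G x) ^ p ≤ (F x * G x) ^ (p/2) := by
    intro x
    have hmn : 0 ≤ min (F x) (G x) := le_min (hFnn x) (hGnn x)
    have rzz : ∀ z : ℝ, 0 ≤ z → z ^ (p/2) * z ^ (p/2) = z ^ p := by
      intro z hz
      rcases hz.eq_or_lt with h | h
      · rw [← h, Real.zero_rpow (by positivity : p/2 ≠ 0), Real.zero_rpow hp0.ne', mul_zero]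
      · rw [← Real.rpow_add h, show p/2 + p/2 = p by ring]
    calc min (F x) (G x) ^ p = (min (F x) (G x) * min (F x) (G x)) ^ (p/2) := by
          rw [Real.mul_rpow hmn hmn, rzz _ hmn]
      _ ≤ (F x * G x) ^ (p/2) :=
          Real.rpow_le_rpow (mul_nonneg hmn hmn)
            (mul_le_mul (min_le_left _ _) (min_le_right _ _) hmn (hFnn x)) hhalf
  -- the constant C
  have hCmem_and_hMC : C ∈ Set.Ioc (0:ℝ) 1 ∧
      (∫ x, min (F x) (G x) ^ p ∂μ) ≤ C * (∫⁻ x, (f x * g x) ^ (p / 2) ∂μ).toReal := by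
    rcases eq_or_ne (∫⁻ x, (f x * g x) ^ (p / 2) ∂μ) 0 with h0 | h0
    · have hC' : C = 1 := by
        rw [hC, if_neg]
        rw [h0]
        exact lt_irrefl 0
      constructor
      · rw [hC']; exact ⟨one_pos, le_rfl⟩
      · rw [hC', h0]
        simp only [ENNReal.toReal_zero,  one_mul]
        calc (∫ x, min (F x) (G x) ^ p ∂μ) ≤ ∫ x, (F x * G x) ^ (p/2) ∂μ :=
              integral_mono intMin intI pmin3
          _ = 0 := by rw [cI, h0, ENNReal.toReal_zero]
    · have hI : 0 < ∫⁻ x, (f x * g x) ^ (p / 2) ∂μ := pos_iff_ne_zero.mpr h0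
      have hIr0 : 0 < (∫⁻ x, (f x * g x) ^ (p / 2) ∂μ).toReal := ENNReal.toReal_pos h0 hIfin
      have hC' : C = min (min (∫⁻ x, f x ^ p ∂μ).toReal (∫⁻ x, g x ^ p ∂μ).toReal)
          (∫⁻ x, (f x * g x) ^ (p / 2) ∂μ).toReal /
          (∫⁻ x, (f x * g x) ^ (p / 2) ∂μ).toReal := by rw [hC, if_pos hI]
      have hfz : (∫⁻ x, f x ^ p ∂μ) ≠ 0 := by
        intro hz
        have hae := (lintegral_eq_zero_iff mfp).mp hz
        have hI0 : ∫⁻ x, (f x * g x) ^ (p / 2) ∂μ = 0 := by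
          rw [← lintegral_zero]
          apply lintegral_congr_ae
          filter_upwards [hae] with x hx
          have hfx : f x = 0 := by
            rcases (ENNReal.rpow_eq_zero_iff).mp hx with ⟨h1, _⟩ | ⟨h1, _⟩
            · exact h1
            · exact absurd h1 (hffin x)
          rw [hfx, zero_mul, ENNReal.zero_rpow_of_pos (by positivity)]
        exact h0 hI0
      have hgz : (∫⁻ x, g x ^ p ∂μ) ≠ 0 := by
        intro hz
        have hae := (lintegral_eq_zero_iff mgp).mp hz
        have hI0 : ∫⁻ x, (f x * g x) ^ (p / 2) ∂μ = 0 := by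
          rw [← lintegral_zero]
          apply lintegral_congr_ae
          filter_upwards [hae] with x hx
          have hgx : g x = 0 := by
            rcases (ENNReal.rpow_eq_zero_iff).mp hx with ⟨h1, _⟩ | ⟨h1, _⟩
            · exact h1
            · exact absurd h1 (hgfin x)
          rw [hgx, mul_zero, ENNReal.zero_rpow_of_pos (by positivity)]
        exact h0 hI0
      constructor
      · constructor
        · rw [hC']
          apply div_pos _ hIr0
          exact lt_min (lt_min (ENNReal.toReal_pos hfz hfp) (ENNReal.toReal_pos hgz hgp)) hIr0
        · rw [hC']
          exact div_le_one_of_le₀ (min_le_right _ _) hIr0.le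
      · rw [hC', div_mul_cancel₀ _ hIr0.ne']
        refine le_min (le_min ?_ ?_) ?_
        · calc (∫ x, min (F x) (G x) ^ p ∂μ) ≤ ∫ x, F x ^ p ∂μ :=
              integral_mono intMin intF pmin1
            _ = _ := cA
        · calc (∫ x, min (F x) (G x) ^ p ∂μ) ≤ ∫ x, G x ^ p ∂μ :=
              integral_mono intMin intG pmin2
            _ = _ := cB
        · calc (∫ x, min (F x) (G x) ^ p ∂μ) ≤ ∫ x, (F x * G x) ^ (p/2) ∂μ :=
              integral_mono intMin intI pmin3
            _ = _ := cI
  obtain ⟨hCmem, hMC⟩ := hCmem_and_hMC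
  have hpsiC : sPsi1 p C ≤ 0 := sPsi1_nonpos hp hCmem
  have hPoint : (fun x => F x ^ p + G x ^ p + sPhi p C * (F x * G x) ^ (p/2)
      + sPsi1 p C * (min (F x) (G x) ^ p - C * (F x * G x) ^ (p/2)))
      ≤ fun x => (F x + G x) ^ p := fun x => pointwise hp hCmem (hFnn x) (hGnn x)
  have iI' : Integrable (fun x => sPhi p C * (F x * G x) ^ (p/2)) μ := intI.const_mul _
  have i12 : Integrable (fun x => F x ^ p + G x ^ p) μ := intF.add intG
  have i123 : Integrable (fun x => F x ^ p + G x ^ p + sPhi p C * (F x * G x) ^ (p/2)) μ :=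
    i12.add iI'
  have iCI : Integrable (fun x => C * (F x * G x) ^ (p/2)) μ := intI.const_mul _
  have iMC : Integrable (fun x => min (F x) (G x) ^ p - C * (F x * G x) ^ (p/2)) μ :=
    intMin.sub iCI
  have iLast : Integrable
      (fun x => sPsi1 p C * (min (F x) (G x) ^ p - C * (F x * G x) ^ (p/2))) μ :=
    iMC.const_mul _
  have intLHS : Integrable (fun x => F x ^ p + G x ^ p + sPhi p C * (F x * G x) ^ (p/2)
      + sPsi1 p C * (min (F x) (G x) ^ p - C * (F x * G x) ^ (p/2))) μ := i123.add iLast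
  have big := integral_mono intLHS intS hPoint
  rw [integral_add i123 iLast, integral_add i12 iI', integral_add intF intG,
    integral_const_mul, integral_const_mul, integral_sub intMin iCI,
    integral_const_mul] at big
  rw [cA, cB, cI, cS] at big
  have hco : sPhi p C = (C ^ (-(1 / p)) + C ^ (1 / p)) ^ p - C⁻¹ - C := rfl
  rw [← hco]
  nlinarith [big, hpsiC, hMC]
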